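/- arXiv:2605.18812 — 3 statements merged into one kernel-verified Lean document; each statement's English description precedes it below -/
import Mathlib

section
/- Let Z_1, ..., Z_{n+1} be exchangeable real-valued random variables and let α ∈ (0,1). Define q̂ as the ⌈(n+1)(1-α)⌉-th smallest value among Z_1,...,Z_n (with q̂ = +∞ if ⌈(n+1)(1-α)⌉ > n). Then P(Z_{n+1} ≤ q̂) ≥ 1 - α. -/
open MeasureTheory
open scoped ENNReal

/-- The `r`-th smallest value (1-indexed) among `Z 0, ..., Z (n-1)`. -/
noncomputable def kthSmallest {n : ℕ} (Z : Fin n → ℝ) (r : ℕ) : ℝ :=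
  (List.insertionSort (· ≤ ·) (List.ofFn Z)).getD (r - 1) 0

/-- The joint law of `(Z 1, ..., Z m)` is invariant under every permutation of indices. -/
def Exchangeable {Ω : Type*} [MeasurableSpace Ω] (μ : Measure Ω) {m : ℕ}
    (Z : Fin m → Ω → ℝ) : Prop :=
  ∀ σ : Equiv.Perm (Fin m),
    Measure.map (fun ω => fun i => Z (σ i) ω) μ = Measure.map (fun ω => fun i => Z i ω) μ

lemma decomp (l : List ℝ) (k : ℕ) (hk : k < l.length) :
    l = l.take k ++ l.get ⟨k, hk⟩ :: l.drop (k+1) := by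
  rw [List.get_eq_getElem, ← List.drop_eq_getElem_cons, List.take_append_drop]

lemma sorted_le_get_iff {l : List ℝ} (hl : l.Pairwise (· ≤ ·)) {k : ℕ} (hk : k < l.length)
    (z : ℝ) : z ≤ l.get ⟨k, hk⟩ ↔ l.countP (fun x => decide (x < z)) ≤ k := by
  have hd := decomp l k hk
  have hl' := hd ▸ hl
  rw [List.pairwise_append] at hl'
  obtain ⟨h1, h2, h3⟩ := hl'
  constructor
  · intro hz
    conv_lhs => rw [hd]
    rw [List.countP_append, List.countP_cons]
    have hdrop : (l.drop (k+1)).countP (fun x => decide (x < z)) = 0 := by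
      rw [List.countP_eq_zero]
      intro a ha
      have : l.get ⟨k, hk⟩ ≤ a := List.rel_of_pairwise_cons h2 ha
      simp only [decide_eq_true_eq]
      linarith
    have htake : (l.take k).countP (fun x => decide (x < z)) ≤ k :=
      le_trans List.countP_le_length (by simp)
    simp only [decide_eq_true_eq, hdrop]
    rw [if_neg (by linarith)]
    omega
  · intro hc
    by_contra hz
    push_neg at hz
    have htake : (l.take k).countP (fun x => decide (x < z)) = k := by
      have : (l.take k).countP (fun x => decide (x < z)) = (l.take k).length := by
        rw [List.countP_eq_length]
        intro a ha
        have : a ≤ l.get ⟨k, hk⟩ := h3 a ha _ (List.mem_cons_self ..)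
        simp only [decide_eq_true_eq]
        linarith
      rw [this, List.length_take]
      omega
    have : k + 1 ≤ l.countP (fun x => decide (x < z)) := by
      conv_rhs => rw [hd]
      rw [List.countP_append, List.countP_cons, htake]
      rw [if_pos (by simp only [decide_eq_true_eq]; linarith)]
      omega
    omega

lemma card_le_get_ge {l : List ℝ} (hl : l.Pairwise (· ≤ ·)) {k : ℕ} (hk : k < l.length) :
    k + 1 ≤ l.countP (fun x => decide (x ≤ l.get ⟨k, hk⟩)) := by
  have hd := decomp l k hk
  obtain ⟨t, ht⟩ : ∃ t, l.get ⟨k, hk⟩ = t := ⟨_, rfl⟩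
  rw [ht] at hd ⊢
  have hl' := hd ▸ hl
  rw [List.pairwise_append] at hl'
  obtain ⟨h1, h2, h3⟩ := hl'
  have htake : (l.take k).countP (fun x => decide (x ≤ t)) = k := by
    have : (l.take k).countP (fun x => decide (x ≤ t)) = (l.take k).length := by
      rw [List.countP_eq_length]
      intro a ha
      simpa using h3 a ha _ (List.mem_cons_self ..)
    rw [this, List.length_take]; omega
  conv_rhs => rw [hd]
  rw [List.countP_append, List.countP_cons, htake, if_pos (by simp)]
  omega

lemma countP_ofFn' {m : ℕ} (f : Fin m → ℝ) (p : ℝ → Bool) :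
    (List.ofFn f).countP p = ∑ i : Fin m, (if p (f i) then 1 else 0) := by
  induction m with
  | zero => simp
  | succ m ih =>
    rw [List.ofFn_succ, List.countP_cons, Fin.sum_univ_succ, ih]
    cases hp : p (f 0) <;> simp [hp, add_comm]

lemma le_kthSmallest_iff {m : ℕ} (v : Fin m → ℝ) {r : ℕ} (h1 : 1 ≤ r) (h2 : r ≤ m) (z : ℝ) :
    z ≤ kthSmallest v r ↔ (List.ofFn v).countP (fun x => decide (x < z)) ≤ r - 1 := by
  set l := List.insertionSort (· ≤ ·) (List.ofFn v) with hls
  have hlen : l.length = m := by rw [hls, List.length_insertionSort, List.length_ofFn]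
  have hk : r - 1 < l.length := by omega
  have hsorted : l.Pairwise (· ≤ ·) := List.pairwise_insertionSort _ _
  have hperm : l.Perm (List.ofFn v) := List.perm_insertionSort _ _
  rw [kthSmallest, ← hls, List.getD_eq_getElem l 0 hk, ← hperm.countP_eq]
  exact sorted_le_get_iff hsorted hk z

lemma kthSmallest_comp_perm {m : ℕ} (w : Fin m → ℝ) (σ : Equiv.Perm (Fin m)) (r : ℕ) :
    kthSmallest (w ∘ σ) r = kthSmallest w r := by
  unfold kthSmallest
  congr 1
  refine List.Perm.eq_of_pairwise' (List.pairwise_insertionSort _ _) (List.pairwise_insertionSort _ _) ?_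
  exact (List.perm_insertionSort _ _).trans ((σ.ofFn_comp_perm w).trans (List.perm_insertionSort _ _).symm)

lemma le_kthSmallest_snoc_iff {m : ℕ} (v : Fin m → ℝ) {r : ℕ} (h1 : 1 ≤ r) (h2 : r ≤ m) (z : ℝ) :
    z ≤ kthSmallest v r ↔ z ≤ kthSmallest (Fin.snoc v z) r := by
  rw [le_kthSmallest_iff v h1 h2, le_kthSmallest_iff (Fin.snoc v z) h1 (by omega)]
  have hof : List.ofFn (Fin.snoc v z : Fin (m+1) → ℝ) = (List.ofFn v).concat z := by
    rw [List.ofFn_succ']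
    congr 1
    · congr 1; funext j; simp
    · simp
  rw [hof, List.concat_eq_append, List.countP_append]
  simp

lemma r_le_card {m : ℕ} (w : Fin (m+1) → ℝ) {r : ℕ} (h1 : 1 ≤ r) (h2 : r ≤ m+1) :
    r ≤ (Finset.univ.filter (fun i => w i ≤ kthSmallest w r)).card := by
  classical
  set l := List.insertionSort (· ≤ ·) (List.ofFn w) with hls
  have hlen : l.length = m+1 := by rw [hls, List.length_insertionSort, List.length_ofFn]
  have hk : r - 1 < l.length := by omega
  have hkth : kthSmallest w r = l.get ⟨r-1, hk⟩ := by
    rw [kthSmallest, ← hls, List.getD_eq_getElem l 0 hk]; rfl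
  have hcount := card_le_get_ge (List.pairwise_insertionSort _ _) hk
  have hperm : l.Perm (List.ofFn w) := List.perm_insertionSort _ _
  rw [hperm.countP_eq, countP_ofFn'] at hcount
  have hcard : (Finset.univ.filter (fun i => w i ≤ kthSmallest w r)).card
      = ∑ i : Fin (m+1), if decide (w i ≤ l.get ⟨r-1, hk⟩) = true then 1 else 0 := by
    rw [Finset.card_filter]
    simp [hkth]
  rw [hcard]
  convert hcount using 2 <;> omega

lemma measurableSet_S {m : ℕ} (i : Fin m) {r : ℕ} (h1 : 1 ≤ r) (h2 : r ≤ m) :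
    MeasurableSet {v : Fin m → ℝ | v i ≤ kthSmallest v r} := by
  classical
  have hset : {v : Fin m → ℝ | v i ≤ kthSmallest v r}
      = (fun v : Fin m → ℝ => ∑ j : Fin m, if v j < v i then 1 else 0) ⁻¹' Set.Iic (r - 1) := by
    ext v
    simp only [Set.mem_setOf_eq, Set.mem_preimage, Set.mem_Iic]
    rw [le_kthSmallest_iff v h1 h2 (v i), countP_ofFn']
    simp
  rw [hset]
  have hmeas : Measurable (fun v : Fin m → ℝ => ∑ j : Fin m, if v j < v i then (1:ℕ) else 0) := by
    refine Finset.measurable_sum _ (fun j _ => ?_)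
    exact Measurable.ite (measurableSet_lt (measurable_pi_apply j) (measurable_pi_apply i))
      measurable_const measurable_const
  exact hmeas measurableSet_Iic

theorem split_conformal_marginal_coverage
    {Ω : Type*} [MeasurableSpace Ω] (μ : Measure Ω) [IsProbabilityMeasure μ]
    (n : ℕ) (Z : Fin (n + 1) → Ω → ℝ) (hZ : ∀ i, Measurable (Z i))
    (hexch : Exchangeable μ Z)
    (α : ℝ) (hα0 : 0 < α) (hα1 : α < 1)
    (r : ℕ) (hr : r = ⌈((n : ℝ) + 1) * (1 - α)⌉₊)
    (qhat : Ω → EReal)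
    (hq : ∀ ω, qhat ω = if r ≤ n then
        ((kthSmallest (fun i : Fin n => Z i.castSucc ω) r : ℝ) : EReal) else (⊤ : EReal)) :
    1 - α ≤ (μ {ω | ((Z (Fin.last n) ω : ℝ) : EReal) ≤ qhat ω}).toReal := by
  classical
  by_cases hrn : r ≤ n
  · -- main branch
    have hr1 : 1 ≤ r := by
      rw [hr]
      exact Nat.one_le_ceil_iff.mpr (mul_pos (by positivity) (by linarith))
    have hrle1 : r ≤ n + 1 := by omega
    set W : Ω → (Fin (n+1) → ℝ) := fun ω j => Z j ω with hWdef
    have hW : Measurable W := measurable_pi_iff.mpr hZ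
    set S : Fin (n+1) → Set (Fin (n+1) → ℝ) := fun i => {v | v i ≤ kthSmallest v r} with hSdef
    have hS : ∀ i, MeasurableSet (S i) := fun i => measurableSet_S i hr1 hrle1
    have hWsnoc : ∀ ω, W ω = Fin.snoc (fun i : Fin n => Z i.castSucc ω) (Z (Fin.last n) ω) := by
      intro ω; funext j
      refine Fin.lastCases ?_ ?_ j
      · simp [hWdef]
      · intro i; simp [hWdef]
    have hevent : {ω | ((Z (Fin.last n) ω : ℝ) : EReal) ≤ qhat ω} = W ⁻¹' S (Fin.last n) := by
      ext ω
      simp only [Set.mem_setOf_eq, Set.mem_preimage, hq ω, if_pos hrn, hSdef]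
      rw [EReal.coe_le_coe_iff]
      rw [le_kthSmallest_snoc_iff _ hr1 hrn (Z (Fin.last n) ω), ← hWsnoc ω]
    have hμeq : ∀ i, μ (W ⁻¹' S i) = μ (W ⁻¹' S (Fin.last n)) := by
      intro i
      have hmap := hexch (Equiv.swap i (Fin.last n))
      set σ := Equiv.swap i (Fin.last n) with hσ
      have hWσ : Measurable (fun ω => fun j => Z (σ j) ω) :=
        measurable_pi_iff.mpr fun j => hZ _
      have hpre : (fun ω => fun j => Z (σ j) ω) ⁻¹' S (Fin.last n) = W ⁻¹' S i := by
        ext ω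
        simp only [Set.mem_preimage, hSdef, Set.mem_setOf_eq]
        have hcomp : (fun j => Z (σ j) ω) = (W ω) ∘ σ := rfl
        rw [hcomp, kthSmallest_comp_perm, hσ, Equiv.swap_apply_right]
      calc μ (W ⁻¹' S i)
          = Measure.map (fun ω => fun j => Z (σ j) ω) μ (S (Fin.last n)) := by
            rw [Measure.map_apply hWσ (hS _), hpre]
        _ = Measure.map (fun ω => fun j => Z j ω) μ (S (Fin.last n)) := by rw [hmap]
        _ = μ (W ⁻¹' S (Fin.last n)) := by rw [Measure.map_apply hW (hS _)]
    have hsum : (r : ℝ≥0∞) * (μ Set.univ) ≤ ∑ i : Fin (n+1), μ (W ⁻¹' S i) := by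
      have hpt : ∀ ω, (r : ℝ≥0∞)
          ≤ ∑ i : Fin (n+1), (W ⁻¹' S i).indicator (1 : Ω → ℝ≥0∞) ω := by
        intro ω
        have heq : ∑ i : Fin (n+1), (W ⁻¹' S i).indicator (1 : Ω → ℝ≥0∞) ω
            = ((Finset.univ.filter (fun i : Fin (n+1) => ω ∈ W ⁻¹' S i)).card : ℝ≥0∞) := by
          rw [← Finset.sum_boole]
          refine Finset.sum_congr rfl fun i _ => ?_
          by_cases h : ω ∈ W ⁻¹' S i <;> simp [h, Set.indicator_apply]
        rw [heq]
        exact_mod_cast r_le_card (W ω) hr1 hrle1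
      calc (r:ℝ≥0∞) * μ Set.univ = ∫⁻ _, (r:ℝ≥0∞) ∂μ := by rw [lintegral_const]
        _ ≤ ∫⁻ ω, ∑ i : Fin (n+1), (W ⁻¹' S i).indicator (1 : Ω → ℝ≥0∞) ω ∂μ :=
            lintegral_mono hpt
        _ = ∑ i : Fin (n+1), ∫⁻ ω, (W ⁻¹' S i).indicator (1 : Ω → ℝ≥0∞) ω ∂μ :=
            lintegral_finset_sum _ (fun i _ => measurable_one.indicator (hW (hS i)))
        _ = ∑ i : Fin (n+1), μ (W ⁻¹' S i) := by
            refine Finset.sum_congr rfl fun i _ => ?_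
            rw [lintegral_indicator_one (hW (hS i))]
    have hsum2 : ∑ i : Fin (n+1), μ (W ⁻¹' S i)
        = ((n+1 : ℕ) : ℝ≥0∞) * μ (W ⁻¹' S (Fin.last n)) := by
      rw [Finset.sum_congr rfl fun i _ => hμeq i, Finset.sum_const, Finset.card_univ,
        Fintype.card_fin, nsmul_eq_mul]
    set P := μ (W ⁻¹' S (Fin.last n)) with hPdef
    have hineq : (r : ℝ≥0∞) ≤ ((n+1 : ℕ) : ℝ≥0∞) * P := by
      have h := hsum
      rw [measure_univ, mul_one, hsum2] at h
      exact h
    have hPfin : P ≠ ⊤ := measure_ne_top μ _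
    have htr : (r : ℝ) ≤ ((n:ℝ)+1) * P.toReal := by
      have h3 := ENNReal.toReal_mono
        (ENNReal.mul_ne_top (ENNReal.natCast_ne_top _) hPfin) hineq
      rw [ENNReal.toReal_natCast, ENNReal.toReal_mul, ENNReal.toReal_natCast] at h3
      convert h3 using 2
      push_cast
      ring
    have hceil : ((n:ℝ)+1) * (1-α) ≤ (r:ℝ) := hr ▸ Nat.le_ceil _
    have hn1 : (0:ℝ) < (n:ℝ)+1 := by positivity
    rw [hevent]
    have := (mul_le_mul_iff_right₀ hn1).mp (le_trans hceil htr)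
    exact this
  · have huniv : {ω | ((Z (Fin.last n) ω : ℝ) : EReal) ≤ qhat ω} = Set.univ := by
      ext ω
      simp [hq ω, if_neg hrn]
    rw [huniv, measure_univ, ENNReal.toReal_one]
    linarith
end

section
/- Let Z_1, ..., Z_{n+1} be exchangeable real-valued random variables that are almost surely distinct, and let α ∈ (0,1) with ⌈(n+1)(1-α)⌉ ≤ n. Define q̂ as the ⌈(n+1)(1-α)⌉-th smallest among Z_1,...,Z_n. Then P(Z_{n+1} ≤ q̂) ≤ 1 - α + 1/(n+1). -/
open MeasureTheory

open ENNReal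

lemma countP_ofFn {n : ℕ} (f : Fin n → ℝ) (p : ℝ → Prop) [DecidablePred p] :
    (List.ofFn f).countP (fun x => decide (p x)) = (Finset.univ.filter (fun i => p (f i))).card := by
  rw [List.ofFn_eq_map, List.countP_map]
  rw [Finset.card_filter]
  simp only [Fin.univ_def, Finset.sum, Multiset.countP_eq_card_filter]
  rw [Multiset.map_coe, Multiset.sum_coe]
  induction (List.finRange n) with
  | nil => simp
  | cons a l ih =>
      simp only [List.countP_cons, List.map_cons, List.sum_cons, ih, Function.comp]
      split <;> simp_all <;> omega

lemma countP_list {l : List ℝ} (p : ℝ → Prop) [DecidablePred p] :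
    l.countP (fun x => decide (p x)) =
      (Finset.univ.filter (fun i : Fin l.length => p (l.get i))).card := by
  conv_lhs => rw [← List.ofFn_get l]
  rw [countP_ofFn]

lemma kth_counts {n r : ℕ} (v : Fin n → ℝ) (hv : Function.Injective v)
    (hr1 : 1 ≤ r) (hrn : r ≤ n) :
    ((Finset.univ.filter (fun j => v j < kthSmallest v r)).card = r - 1 ∧
     (Finset.univ.filter (fun j => v j ≤ kthSmallest v r)).card = r) ∧
     ∃ j, v j = kthSmallest v r := by
  set s := List.insertionSort (· ≤ ·) (List.ofFn v) with hs
  have hperm : s.Perm (List.ofFn v) := List.perm_insertionSort _ _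
  have hlen : s.length = n := by rw [hperm.length_eq, List.length_ofFn]
  have hnd : s.Nodup := hperm.nodup_iff.mpr (List.nodup_ofFn.mpr hv)
  have hsorted : s.SortedLT :=
    (List.sortedLE_insertionSort).sortedLT_of_nodup hnd
  have hidx : r - 1 < s.length := by omega
  have hq : kthSmallest v r = s.get ⟨r - 1, hidx⟩ := by
    rw [kthSmallest, ← hs, List.getD_eq_getElem (hn := hidx), List.get_eq_getElem]
  have hmono : StrictMono s.get := hsorted
  have key : ∀ (p : ℝ → Prop) [DecidablePred p],
      (Finset.univ.filter (fun j => p (v j))).card =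
      (Finset.univ.filter (fun k : Fin s.length => p (s.get k))).card := by
    intro p _
    rw [← countP_ofFn, ← countP_list, hperm.countP_eq]
  refine ⟨⟨?_, ?_⟩, ?_⟩
  · rw [key (fun x => x < kthSmallest v r), hq]
    have : (Finset.univ.filter (fun k : Fin s.length => s.get k < s.get ⟨r-1, hidx⟩))
        = Finset.Iio ⟨r-1, hidx⟩ := by
      ext k
      simp only [Finset.mem_filter, Finset.mem_univ, true_and, Finset.mem_Iio]
      exact hmono.lt_iff_lt
    rw [this, Fin.card_Iio]
  · rw [key (fun x => x ≤ kthSmallest v r), hq]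
    have : (Finset.univ.filter (fun k : Fin s.length => s.get k ≤ s.get ⟨r-1, hidx⟩))
        = Finset.Iic ⟨r-1, hidx⟩ := by
      ext k
      simp only [Finset.mem_filter, Finset.mem_univ, true_and, Finset.mem_Iic]
      exact hmono.le_iff_le
    rw [this, Fin.card_Iic]
    simp only []
    omega
  · have : kthSmallest v r ∈ List.ofFn v := by
      rw [hq]; exact hperm.mem_iff.mp (s.get_mem _)
    obtain ⟨j, hj⟩ := Set.mem_range.mp (List.mem_ofFn.mp this)
    exact ⟨j, hj⟩

lemma rank_count {m r : ℕ} (v : Fin m → ℝ) (hv : Function.Injective v) (hrm : r ≤ m) :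
    (Finset.univ.filter (fun i : Fin m =>
      (Finset.univ.filter (fun j => v j < v i)).card < r)).card = r := by
  set N : Fin m → ℕ := fun i => (Finset.univ.filter (fun j => v j < v i)).card with hN
  have hmono : ∀ i i', v i < v i' → N i < N i' := by
    intro i i' h
    apply Finset.card_lt_card
    constructor
    · intro j hj
      simp only [Finset.mem_filter, Finset.mem_univ, true_and] at hj ⊢
      linarith
    · intro hsub
      have := hsub (by simp [h] : i ∈ Finset.univ.filter (fun j => v j < v i'))
      simp at this
  have hNinj : Function.Injective N := by
    intro i i' h
    by_contra hne
    rcases lt_trichotomy (v i) (v i') with hlt | heq | hgt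
    · exact absurd h (Nat.ne_of_lt (hmono _ _ hlt))
    · exact hne (hv heq)
    · exact absurd h.symm (Nat.ne_of_lt (hmono _ _ hgt))
  have hNlt : ∀ i, N i < m := by
    intro i
    have h1 : Finset.univ.filter (fun j => v j < v i) ⊆ Finset.univ.erase i := by
      intro j hj
      simp only [Finset.mem_filter, Finset.mem_univ, true_and] at hj
      simp only [Finset.mem_erase, Finset.mem_univ, and_true]
      intro hc; rw [hc] at hj; exact lt_irrefl _ hj
    calc N i ≤ (Finset.univ.erase i).card := Finset.card_le_card h1
    _ < Finset.univ.card := Finset.card_erase_lt_of_mem (Finset.mem_univ i)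
    _ = m := Finset.card_univ.trans (Fintype.card_fin m)
  have himg : Finset.univ.image N = Finset.range m := by
    apply Finset.eq_of_subset_of_card_le
    · intro k hk
      simp only [Finset.mem_image] at hk
      obtain ⟨i, _, hi⟩ := hk
      simp [← hi, hNlt i]
    · rw [Finset.card_range, Finset.card_image_of_injective _ hNinj]
      simp
  have hfi : (Finset.univ.filter (fun i => N i < r)).card
      = ((Finset.univ.image N).filter (· < r)).card := by
    rw [Finset.filter_image, Finset.card_image_of_injective _ hNinj]
  rw [hfi, himg]
  have : (Finset.range m).filter (· < r) = Finset.range r := by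
    ext k
    simp only [Finset.mem_filter, Finset.mem_range]
    omega
  rw [this, Finset.card_range]

lemma key_equiv {n r : ℕ} (v : Fin (n+1) → ℝ) (hv : Function.Injective v)
    (hr1 : 1 ≤ r) (hrn : r ≤ n) :
    (v (Fin.last n) ≤ kthSmallest (fun i : Fin n => v i.castSucc) r) ↔
    (Finset.univ.filter (fun j : Fin (n+1) => v j < v (Fin.last n))).card < r := by
  set v' : Fin n → ℝ := fun i => v i.castSucc with hv'
  have hv'inj : Function.Injective v' := fun a b h =>
    Fin.castSucc_injective n (hv h)
  obtain ⟨⟨ca, cb⟩, j₀, hj₀⟩ := kth_counts v' hv'inj hr1 hrn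
  set q := kthSmallest v' r
  have hsplit : (Finset.univ.filter (fun j : Fin (n+1) => v j < v (Fin.last n))).card
      = (Finset.univ.filter (fun j : Fin n => v' j < v (Fin.last n))).card := by
    rw [Finset.card_filter, Finset.card_filter, Fin.sum_univ_castSucc]
    simp [hv']
  constructor
  · intro h
    have hne : v (Fin.last n) ≠ q := by
      rw [← hj₀]
      intro hc
      exact absurd (hv hc.symm) (Fin.ne_last_of_lt (Fin.castSucc_lt_last j₀))
    have hlt : v (Fin.last n) < q := lt_of_le_of_ne h hne
    have hsub : (Finset.univ.filter (fun j : Fin n => v' j < v (Fin.last n)))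
        ⊆ (Finset.univ.filter (fun j => v' j < q)) := by
      intro j hj
      simp only [Finset.mem_filter, Finset.mem_univ, true_and] at hj ⊢
      linarith
    have := Finset.card_le_card hsub
    rw [hsplit]
    omega
  · intro h
    by_contra hc
    push_neg at hc
    have hsub : (Finset.univ.filter (fun j : Fin n => v' j ≤ q))
        ⊆ (Finset.univ.filter (fun j => v' j < v (Fin.last n))) := by
      intro j hj
      simp only [Finset.mem_filter, Finset.mem_univ, true_and] at hj ⊢
      linarith
    have := Finset.card_le_card hsub
    rw [hsplit] at h
    omega

lemma cnt_comp {m : ℕ} (σ : Equiv.Perm (Fin m)) (v : Fin m → ℝ) (i : Fin m) :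
    (Finset.univ.filter (fun j => v (σ j) < v (σ i))).card
      = (Finset.univ.filter (fun j => v j < v (σ i))).card := by
  have : (Finset.univ.filter (fun j => v (σ j) < v (σ i)))
      = (Finset.univ.filter (fun j => v j < v (σ i))).map σ.symm.toEmbedding := by
    ext j
    simp [Finset.mem_map_equiv]
  rw [this, Finset.card_map]


theorem split_conformal_near_tightness
    {Ω : Type*} [MeasurableSpace Ω] (μ : Measure Ω) [IsProbabilityMeasure μ]
    (n : ℕ) (Z : Fin (n + 1) → Ω → ℝ) (hZ : ∀ i, Measurable (Z i))
    (hexch : Exchangeable μ Z)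
    (hdistinct : ∀ᵐ ω ∂μ, ∀ i j : Fin (n + 1), i ≠ j → Z i ω ≠ Z j ω)
    (α : ℝ) (hα0 : 0 < α) (hα1 : α < 1)
    (r : ℕ) (hr : r = ⌈((n : ℝ) + 1) * (1 - α)⌉₊) (hrn : r ≤ n)
    (qhat : Ω → ℝ)
    (hq : ∀ ω, qhat ω = kthSmallest (fun i : Fin n => Z i.castSucc ω) r) :
    (μ {ω | Z (Fin.last n) ω ≤ qhat ω}).toReal ≤ 1 - α + 1 / (n + 1) := by
  classical
  have hx0 : (0:ℝ) < ((n : ℝ) + 1) * (1 - α) := by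
    apply _root_.mul_pos (by positivity) (by linarith)
  have hr1 : 1 ≤ r := by
    rw [hr]
    exact Nat.one_le_iff_ne_zero.mpr (Nat.pos_iff_ne_zero.mp (Nat.ceil_pos.mpr hx0))
  -- the vector map
  set F : Ω → (Fin (n+1) → ℝ) := fun ω i => Z i ω with hF
  have hFm : Measurable F := measurable_pi_lambda _ hZ
  -- counting function and events
  set c : (Fin (n+1) → ℝ) → Fin (n+1) → ℕ :=
    fun v i => (Finset.univ.filter (fun j => v j < v i)).card with hc
  set E : Fin (n+1) → Set (Fin (n+1) → ℝ) := fun i => {v | c v i < r} with hE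
  have hcm : ∀ i, Measurable (fun v => c v i) := by
    intro i
    have : (fun v => c v i)
        = fun v => ∑ j, if v j < v i then 1 else 0 := by
      funext v; rw [hc]; exact Finset.card_filter _ _
    rw [this]
    exact Finset.measurable_sum _ (fun j _ =>
      Measurable.ite (measurableSet_lt (measurable_pi_apply j) (measurable_pi_apply i))
        measurable_const measurable_const)
  have hEm : ∀ i, MeasurableSet (E i) := by
    intro i
    exact (hcm i) (MeasurableSet.of_discrete (s := Set.Iio r))
  set A : Fin (n+1) → Set Ω := fun i => F ⁻¹' (E i) with hA
  have hAm : ∀ i, MeasurableSet (A i) := fun i => hFm (hEm i)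
  -- all A i have equal measure
  have heq : ∀ i, μ (A i) = μ (A (Fin.last n)) := by
    intro i
    set σ := Equiv.swap i (Fin.last n) with hσ
    have hσm : Measurable (fun ω => fun j => Z (σ j) ω) :=
      measurable_pi_lambda _ (fun j => hZ _)
    have h1 := congrArg (fun ν => ν (E (Fin.last n))) (hexch σ)
    rw [Measure.map_apply hσm (hEm _), Measure.map_apply hFm (hEm _)] at h1
    have hpre : (fun ω => fun j => Z (σ j) ω) ⁻¹' (E (Fin.last n)) = A i := by
      ext ω
      show (Finset.univ.filter (fun j => F ω (σ j) < F ω (σ (Fin.last n)))).card < r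
        ↔ c (F ω) i < r
      rw [cnt_comp σ (F ω) (Fin.last n),
        show σ (Fin.last n) = i from Equiv.swap_apply_right _ _]
    rw [hpre] at h1
    exact h1
  -- sum of indicators is a.e. r
  have hsum_pt : ∀ᵐ ω ∂μ,
      (∑ i, (A i).indicator (fun _ => (1:ℝ≥0∞)) ω) = (r : ℝ≥0∞) := by
    filter_upwards [hdistinct] with ω hω
    have hinj : Function.Injective (F ω) := by
      intro a b hab
      by_contra hne
      exact hω a b hne hab
    have hcount := rank_count (F ω) hinj (hrn.trans (Nat.le_succ n))
    calc (∑ i, (A i).indicator (fun _ => (1:ℝ≥0∞)) ω)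
        = ∑ i : Fin (n+1), if (Finset.univ.filter (fun j => F ω j < F ω i)).card < r
            then (1:ℝ≥0∞) else 0 := by
          refine Finset.sum_congr rfl (fun i _ => ?_)
          rw [Set.indicator_apply]
          exact if_congr Iff.rfl rfl rfl
      _ = ((Finset.univ.filter (fun i : Fin (n+1) =>
            (Finset.univ.filter (fun j => F ω j < F ω i)).card < r)).card : ℝ≥0∞) :=
          Finset.sum_boole _ _
      _ = (r : ℝ≥0∞) := by rw [hcount]
  -- total mass computation
  have hkey : (↑(n+1) : ℝ≥0∞) * μ (A (Fin.last n)) = (r : ℝ≥0∞) := by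
    have h2 : ∑ i, μ (A i) = (r : ℝ≥0∞) := by
      have h3 : ∀ i : Fin (n+1), μ (A i) = ∫⁻ ω, (A i).indicator (fun _ => (1:ℝ≥0∞)) ω ∂μ := by
        intro i
        rw [lintegral_indicator (hAm i)]
        simp
      calc ∑ i, μ (A i)
          = ∑ i, ∫⁻ ω, (A i).indicator (fun _ => (1:ℝ≥0∞)) ω ∂μ :=
            Finset.sum_congr rfl (fun i _ => h3 i)
        _ = ∫⁻ ω, ∑ i, (A i).indicator (fun _ => (1:ℝ≥0∞)) ω ∂μ :=
            (lintegral_finset_sum _ (fun i _ =>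
              (measurable_const.indicator (hAm i)))).symm
        _ = ∫⁻ _, (r : ℝ≥0∞) ∂μ := lintegral_congr_ae hsum_pt
        _ = (r : ℝ≥0∞) := by simp
    rw [← h2]
    rw [Finset.sum_congr rfl (fun i _ => heq i)]
    simp [Finset.card_univ, mul_comm]
  -- identify the target event with A last, a.e.
  have hae : {ω | Z (Fin.last n) ω ≤ qhat ω} =ᵐ[μ] A (Fin.last n) := by
    rw [Filter.eventuallyEq_set]
    filter_upwards [hdistinct] with ω hω
    have hinj : Function.Injective (F ω) := by
      intro a b hab
      by_contra hne
      exact hω a b hne hab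
    have := key_equiv (F ω) hinj hr1 hrn
    simp only [Set.mem_setOf_eq, hA, Set.mem_preimage, hE, hc]
    rw [hq ω]
    exact this
  have hμeq : μ {ω | Z (Fin.last n) ω ≤ qhat ω} = μ (A (Fin.last n)) := measure_congr hae
  -- convert to reals
  have hfin : μ (A (Fin.last n)) ≠ ⊤ := measure_ne_top _ _
  have htr : ((n:ℝ) + 1) * (μ (A (Fin.last n))).toReal = r := by
    have := congrArg ENNReal.toReal hkey
    rw [ENNReal.toReal_mul] at this
    simpa [ENNReal.toReal_add] using this
  have hval : (μ {ω | Z (Fin.last n) ω ≤ qhat ω}).toReal = r / ((n:ℝ)+1) := by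
    rw [hμeq, eq_div_iff (by positivity : ((n:ℝ)+1) ≠ 0), mul_comm, htr]
  rw [hval]
  have hceil : (r : ℝ) ≤ ((n:ℝ)+1) * (1 - α) + 1 := by
    rw [hr]
    push_cast
    exact (Nat.ceil_lt_add_one hx0.le).le
  have hpos : (0:ℝ) < (n:ℝ) + 1 := by positivity
  rw [div_le_iff₀ hpos]
  calc (r : ℝ) ≤ ((n:ℝ)+1) * (1 - α) + 1 := hceil
    _ = (1 - α + 1/((n:ℝ)+1)) * ((n:ℝ)+1) := by field_simp
end

section
/- Under the hypotheses of the PASC theorem, with the joint maximum scores M_1,...,M_{n+1} almost surely distinct and ⌈(n+1)(1-α)⌉ ≤ n, the joint coverage satisfies P(∀ k, S_{k,n+1} ≤ q̂) ≤ 1 - α + 1/(n+1). -/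
open MeasureTheory

/-- The joint law of the `m` random vectors `i ↦ (S · i)` in `ℝ^K` is invariant under
every permutation of the sample indices. -/
def ExchangeableVec {Ω : Type*} [MeasurableSpace Ω] (μ : Measure Ω) {K m : ℕ}
    (S : Fin K → Fin m → Ω → ℝ) : Prop :=
  ∀ σ : Equiv.Perm (Fin m),
    Measure.map (fun ω => fun i => fun k => S k (σ i) ω) μ =
      Measure.map (fun ω => fun i => fun k => S k i ω) μ


open scoped ENNReal NNReal

theorem card_filter_eq_length_filter {n : ℕ} (z : Fin n → ℝ) (p : ℝ → Prop) [DecidablePred p] :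
    (Finset.univ.filter (fun j => p (z j))).card = ((List.ofFn z).filter (fun x => p x)).length := by
  rw [List.ofFn_eq_map, ← List.countP_eq_length_filter, List.countP_map,
    List.countP_eq_length_filter]
  simp only [Fin.univ_def, Finset.filter, Finset.card, Function.comp]
  rfl

theorem count_lt_of_le_kthSmallest {n : ℕ} (z : Fin n → ℝ) (r : ℕ)
    (h1 : 1 ≤ r) (hrn : r ≤ n) (m : ℝ) (hm : ∀ j, m ≠ z j)
    (hle : m ≤ kthSmallest z r) :
    (Finset.univ.filter (fun j => z j < m)).card < r := by
  set L := List.insertionSort (· ≤ ·) (List.ofFn z) with hL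
  have hlen : L.length = n := by rw [hL, List.length_insertionSort, List.length_ofFn]
  have hsort : L.Pairwise (· ≤ ·) := List.pairwise_insertionSort _ _
  have hperm : L.Perm (List.ofFn z) := List.perm_insertionSort _ _
  have hr1 : r - 1 < L.length := by omega
  have hqdef : kthSmallest z r = L.get ⟨r - 1, hr1⟩ := List.getD_eq_getElem _ _ hr1
  set q := L.get ⟨r - 1, hr1⟩ with hqq
  have hmq : m < q := by
    rcases lt_or_eq_of_le (hqdef ▸ hle) with h | h
    · exact h
    · exfalso
      have h1' : q ∈ L := L.get_mem _
      have h2' : q ∈ List.ofFn z := hperm.mem_iff.mp h1'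
      obtain ⟨j, hj⟩ := List.mem_ofFn.mp h2'
      exact hm j (h.trans hj.symm)
  rw [card_filter_eq_length_filter z (fun x => x < m), ← List.countP_eq_length_filter]
  have hcnt : List.countP (fun x => decide (x < m)) (List.ofFn z)
      = List.countP (fun x => decide (x < m)) L := (hperm.countP_eq _).symm
  rw [hcnt]
  have hsplit : L = L.take (r-1) ++ L.drop (r-1) := (List.take_append_drop _ _).symm
  have hdrop0 : List.countP (fun x => decide (x < m)) (L.drop (r-1)) = 0 := by
    rw [List.countP_eq_zero]
    intro x hx
    simp only [decide_eq_true_eq, not_lt]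
    obtain ⟨i, hi⟩ := List.mem_iff_get.mp hx
    have hidx : r - 1 + (i : ℕ) < L.length := by
      have h2 := i.2
      have h3 : (List.drop (r-1) L).length = L.length - (r-1) := List.length_drop
      omega
    have hxeq : x = L.get ⟨r - 1 + i, hidx⟩ := by
      rw [← hi]
      simp [List.getElem_drop]
    have hqx : q ≤ x := by
      rw [hxeq]
      exact hsort.rel_get_of_le (by simp [Fin.le_def])
    exact le_of_lt (lt_of_lt_of_le hmq hqx)
  calc List.countP (fun x => decide (x < m)) L
      = List.countP _ (L.take (r-1)) + List.countP _ (L.drop (r-1)) := by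
        conv_lhs => rw [hsplit]
        exact List.countP_append
    _ = List.countP (fun x => decide (x < m)) (L.take (r-1)) := by rw [hdrop0, Nat.add_zero]
    _ ≤ (L.take (r-1)).length := List.countP_le_length
    _ ≤ r - 1 := by rw [List.length_take]; omega
    _ < r := by omega

noncomputable def rankF {m : ℕ} (f : Fin m → ℝ) (i : Fin m) : ℕ :=
  (Finset.univ.filter (fun j => f j ≤ f i)).card

theorem rankF_comp_perm {m : ℕ} (f : Fin m → ℝ) (σ : Equiv.Perm (Fin m)) (i : Fin m) :
    rankF (fun j => f (σ j)) i = rankF f (σ i) := by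
  unfold rankF
  apply Finset.card_equiv σ
  intro j
  simp

theorem rankF_strictmono {m : ℕ} (f : Fin m → ℝ) {i j : Fin m} (h : f i < f j) :
    rankF f i < rankF f j := by
  apply Finset.card_lt_card
  constructor
  · intro k hk
    simp only [Finset.mem_filter, Finset.mem_univ, true_and] at *
    exact hk.trans h.le
  · intro hsub
    have := hsub (by simp : j ∈ Finset.univ.filter (fun k => f k ≤ f j))
    simp only [Finset.mem_filter, Finset.mem_univ, true_and] at this
    exact absurd this (not_le.mpr h)

theorem rankF_injective {m : ℕ} (f : Fin m → ℝ) (hf : ∀ i j : Fin m, i ≠ j → f i ≠ f j) :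
    Function.Injective (rankF f) := by
  intro i j hij
  by_contra hne
  rcases lt_or_gt_of_ne (hf i j hne) with h | h
  · exact absurd hij (rankF_strictmono f h).ne
  · exact absurd hij.symm (rankF_strictmono f h).ne

theorem rankF_card_filter {m : ℕ} (f : Fin m → ℝ) (hf : ∀ i j : Fin m, i ≠ j → f i ≠ f j)
    (r : ℕ) (h1 : 1 ≤ r) (hrm : r ≤ m) :
    (Finset.univ.filter (fun i => rankF f i ≤ r)).card = r := by
  have hinj := rankF_injective f hf
  have h1b : ∀ i, rankF f i ∈ Finset.Icc 1 m := by
    intro i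
    simp only [Finset.mem_Icc]
    constructor
    · exact Finset.card_pos.mpr ⟨i, by simp⟩
    · exact (Finset.card_filter_le _ _).trans (by simp)
  have himg : Finset.univ.image (rankF f) = Finset.Icc 1 m := by
    apply Finset.eq_of_subset_of_card_le
    · intro a ha
      obtain ⟨i, _, hi⟩ := Finset.mem_image.mp ha
      exact hi ▸ h1b i
    · rw [Finset.card_image_of_injective _ hinj]
      simp
  have key : (Finset.univ.image (rankF f)).filter (· ≤ r)
      = (Finset.univ.filter (fun i => rankF f i ≤ r)).image (rankF f) :=
    Finset.filter_image
  have := congrArg Finset.card key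
  rw [himg, Finset.card_image_of_injective _ hinj] at this
  rw [← this]
  have : (Finset.Icc 1 m).filter (· ≤ r) = Finset.Icc 1 r := by
    ext a
    simp only [Finset.mem_filter, Finset.mem_Icc]
    omega
  rw [this, Nat.card_Icc]
  omega

theorem pasc_near_tightness
    {Ω : Type*} [MeasurableSpace Ω] (μ : Measure Ω) [IsProbabilityMeasure μ]
    (n K : ℕ) (hK : 0 < K)
    (S : Fin K → Fin (n + 1) → Ω → ℝ) (hS : ∀ k i, Measurable (S k i))
    (hexch : ExchangeableVec μ S)
    (α : ℝ) (hα0 : 0 < α) (hα1 : α < 1)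
    (M : Fin (n + 1) → Ω → ℝ)
    (hM : ∀ i ω, M i ω =
      Finset.univ.sup' (Finset.univ_nonempty_iff.mpr ⟨⟨0, hK⟩⟩) (fun k => S k i ω))
    (hdistinct : ∀ᵐ ω ∂μ, ∀ i j : Fin (n + 1), i ≠ j → M i ω ≠ M j ω)
    (r : ℕ) (hr : r = ⌈((n : ℝ) + 1) * (1 - α)⌉₊) (hrn : r ≤ n)
    (qhat : Ω → ℝ)
    (hq : ∀ ω, qhat ω = kthSmallest (fun i : Fin n => M i.castSucc ω) r) :
    (μ {ω | ∀ k, S k (Fin.last n) ω ≤ qhat ω}).toReal ≤ 1 - α + 1 / (n + 1) := by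
  classical
  have hKne : (Finset.univ : Finset (Fin K)).Nonempty := Finset.univ_nonempty_iff.mpr ⟨⟨0, hK⟩⟩
  have h1α : (0:ℝ) < 1 - α := by linarith
  have hr1 : 1 ≤ r := by
    rw [hr]
    apply Nat.one_le_ceil_iff.mpr
    positivity
  -- the joint score vector
  set V : Ω → (Fin (n+1) → Fin K → ℝ) := fun ω i k => S k i ω with hV
  have hVmeas : Measurable V :=
    measurable_pi_lambda _ (fun i => measurable_pi_lambda _ (fun k => hS k i))
  -- max of each column
  set g : (Fin (n+1) → Fin K → ℝ) → Fin (n+1) → ℝ :=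
    fun v i => Finset.univ.sup' hKne (fun k => v i k) with hg
  have hgmeas : ∀ i, Measurable (fun v => g v i) := by
    intro i
    have h := Finset.measurable_sup' (α := ℝ) hKne
      (f := fun k (v : Fin (n+1) → Fin K → ℝ) => v i k)
      (fun k _ => (measurable_pi_apply k).comp (measurable_pi_apply i))
    convert h using 1
    funext v
    rw [Finset.sup'_apply]
  have hgV : ∀ ω j, g (V ω) j = M j ω := by
    intro ω j
    rw [hM j ω]
  -- the rank events
  set A : Fin (n+1) → Set (Fin (n+1) → Fin K → ℝ) :=
    fun i => {v | rankF (g v) i ≤ r} with hA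
  have hAmeas : ∀ i, MeasurableSet (A i) := by
    intro i
    have hsum : (fun v => rankF (g v) i)
        = fun v => ∑ j : Fin (n+1), if g v j ≤ g v i then 1 else 0 := by
      funext v
      rw [rankF, Finset.card_filter]
    have hFmeas : Measurable (fun v => rankF (g v) i) := by
      rw [hsum]
      apply Finset.measurable_sum
      intro j _
      exact Measurable.ite (measurableSet_le (hgmeas j) (hgmeas i))
        measurable_const measurable_const
    have : A i = (fun v => rankF (g v) i) ⁻¹' (Set.Iic r) := rfl
    rw [this]
    exact hFmeas measurableSet_Iic
  set E : Fin (n+1) → Set Ω := fun i => V ⁻¹' (A i) with hE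
  have hEmeas : ∀ i, MeasurableSet (E i) := fun i => hVmeas (hAmeas i)
  -- Step 1: all E i have the same measure
  have hsame : ∀ i, μ (E i) = μ (E (Fin.last n)) := by
    intro i
    set σ : Equiv.Perm (Fin (n+1)) := Equiv.swap i (Fin.last n) with hσ
    have hmap := hexch σ
    have hPmeas : Measurable (fun v : Fin (n+1) → Fin K → ℝ => fun i' => v (σ i')) :=
      measurable_pi_lambda _ (fun i' => measurable_pi_apply (σ i'))
    have hcomp : (fun ω => fun i' => fun k => S k (σ i') ω)
        = (fun v : Fin (n+1) → Fin K → ℝ => fun i' => v (σ i')) ∘ V := rfl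
    rw [hcomp] at hmap
    have h1 : Measure.map ((fun v : Fin (n+1) → Fin K → ℝ => fun i' => v (σ i')) ∘ V) μ
        (A (Fin.last n)) = Measure.map V μ (A (Fin.last n)) := by rw [hmap]
    rw [Measure.map_apply (hPmeas.comp hVmeas) (hAmeas _),
      Measure.map_apply hVmeas (hAmeas _)] at h1
    have hpre : (fun v : Fin (n+1) → Fin K → ℝ => fun i' => v (σ i')) ⁻¹' (A (Fin.last n))
        = A i := by
      ext v
      simp only [hA, Set.mem_preimage, Set.mem_setOf_eq]
      have hgperm : g (fun i' => v (σ i')) = fun j => g v (σ j) := rfl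
      rw [hgperm, rankF_comp_perm (g v) σ (Fin.last n), Equiv.swap_apply_right]
    show μ (V ⁻¹' A i) = μ (V ⁻¹' A (Fin.last n))
    rw [← hpre, ← Set.preimage_comp]
    exact h1
  -- Step 2: the measures sum to r
  have hsum : ∑ i : Fin (n+1), μ (E i) = (r : ℝ≥0∞) := by
    have h1 : ∀ i, μ (E i) = ∫⁻ ω, (E i).indicator (fun _ => (1:ℝ≥0∞)) ω ∂μ :=
      fun i => (lintegral_indicator_one (hEmeas i)).symm
    simp only [h1]
    rw [← lintegral_finset_sum _ (fun i _ => Measurable.indicator measurable_const (hEmeas i))]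
    have hae : ∀ᵐ ω ∂μ, (∑ i : Fin (n+1), (E i).indicator (fun _ => (1:ℝ≥0∞)) ω)
        = (r : ℝ≥0∞) := by
      filter_upwards [hdistinct] with ω hω
      have hind : ∀ i, (E i).indicator (fun _ => (1:ℝ≥0∞)) ω
          = if ω ∈ E i then 1 else 0 := fun i => Set.indicator_apply _ _ _
      simp only [hind]
      rw [Finset.sum_boole]
      have hgVω : g (V ω) = fun j => M j ω := funext (hgV ω)
      have hfilt : (Finset.univ.filter (fun i => ω ∈ E i))
          = Finset.univ.filter (fun i => rankF (fun j => M j ω) i ≤ r) := by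
        ext i
        simp only [Finset.mem_filter, Finset.mem_univ, true_and, hE, hA,
          Set.mem_preimage, Set.mem_setOf_eq, hgVω]
      rw [hfilt, rankF_card_filter (fun j => M j ω) hω r hr1 (by omega)]
    rw [lintegral_congr_ae hae, lintegral_const, measure_univ, mul_one]
  -- Step 3: a.e. containment of the coverage event in E last
  have hsub : ∀ᵐ ω ∂μ, ω ∈ {ω | ∀ k, S k (Fin.last n) ω ≤ qhat ω} → ω ∈ E (Fin.last n) := by
    filter_upwards [hdistinct] with ω hω hmem
    
    set m := M (Fin.last n) ω with hmdef
    set z : Fin n → ℝ := fun j => M j.castSucc ω with hz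
    have hMle : m ≤ qhat ω := by
      rw [hmdef, hM]
      exact Finset.sup'_le _ _ (fun k _ => hmem k)
    have hmz : ∀ j, m ≠ z j := fun j =>
      hω (Fin.last n) j.castSucc (Fin.castSucc_lt_last j).ne'
    have hle : m ≤ kthSmallest z r := by rw [← hq ω]; exact hMle
    have hcount := count_lt_of_le_kthSmallest z r hr1 hrn m hmz hle
    show ω ∈ E (Fin.last n)
    have hgVω : g (V ω) = fun j => M j ω := funext (hgV ω)
    simp only [hE, hA, Set.mem_preimage, Set.mem_setOf_eq, hgVω]
    have hsplitset : Finset.univ.filter (fun j : Fin (n+1) => M j ω ≤ m)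
        = insert (Fin.last n)
            ((Finset.univ.filter (fun j : Fin n => z j < m)).image Fin.castSucc) := by
      ext j
      simp only [Finset.mem_filter, Finset.mem_univ, true_and, Finset.mem_insert,
        Finset.mem_image]
      constructor
      · intro hj
        rcases Fin.eq_castSucc_or_eq_last j with ⟨j', rfl⟩ | rfl
        · exact Or.inr ⟨j', ⟨lt_of_le_of_ne hj (hω _ _ (Fin.castSucc_lt_last j').ne), rfl⟩⟩
        · exact Or.inl rfl
      · rintro (rfl | ⟨j', ⟨hj', rfl⟩⟩)
        · exact le_refl _
        · exact le_of_lt hj'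
    have hlast_notmem : Fin.last n ∉
        (Finset.univ.filter (fun j : Fin n => z j < m)).image Fin.castSucc := by
      simp only [Finset.mem_image]
      rintro ⟨j', _, hj'⟩
      exact (Fin.castSucc_lt_last j').ne hj'
    have hcard : rankF (fun j => M j ω) (Fin.last n)
        = (Finset.univ.filter (fun j : Fin n => z j < m)).card + 1 := by
      rw [rankF]
      rw [show (Finset.univ.filter (fun j : Fin (n+1) => M j ω ≤ M (Fin.last n) ω))
        = Finset.univ.filter (fun j : Fin (n+1) => M j ω ≤ m) from rfl]
      rw [hsplitset, Finset.card_insert_of_notMem hlast_notmem,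
        Finset.card_image_of_injective _ (Fin.castSucc_injective n)]
    rw [hcard]
    omega
  have hle_meas : μ {ω | ∀ k, S k (Fin.last n) ω ≤ qhat ω} ≤ μ (E (Fin.last n)) :=
    measure_mono_ae hsub
  have hsum2 : (((n:ℕ) + 1 : ℕ) : ℝ≥0∞) * μ (E (Fin.last n)) = (r:ℝ≥0∞) := by
    rw [← hsum, Finset.sum_congr rfl (fun i _ => hsame i), Finset.sum_const,
      Finset.card_univ, Fintype.card_fin, nsmul_eq_mul]
  have hfin : μ (E (Fin.last n)) ≠ ⊤ := measure_ne_top μ _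
  have hEval : (μ (E (Fin.last n))).toReal = (r:ℝ) / ((n:ℝ)+1) := by
    have h2 := congrArg ENNReal.toReal hsum2
    rw [ENNReal.toReal_mul, ENNReal.toReal_natCast, ENNReal.toReal_natCast] at h2
    have hpos : ((n:ℝ)+1) ≠ 0 := by positivity
    push_cast at h2
    field_simp
    linarith
  have hpos : (0:ℝ) < (n:ℝ)+1 := by positivity
  calc (μ {ω | ∀ k, S k (Fin.last n) ω ≤ qhat ω}).toReal
      ≤ (μ (E (Fin.last n))).toReal := ENNReal.toReal_mono hfin hle_meas
    _ = (r:ℝ) / ((n:ℝ)+1) := hEval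
    _ ≤ 1 - α + 1/((n:ℝ)+1) := by
        have hc : (r:ℝ) ≤ ((n:ℝ)+1)*(1-α) + 1 := by
          rw [hr]
          exact (Nat.ceil_lt_add_one (mul_nonneg (by positivity) h1α.le)).le
        rw [div_le_iff₀ hpos]
        have hid : (1 - α + 1/((n:ℝ)+1)) * ((n:ℝ)+1) = ((n:ℝ)+1)*(1-α) + 1 := by
          field_simp
        rw [hid]
        exact hc
end
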